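/- For all objects X, Z of ℰ and all i ≥ 0 there is a functorial isomorphism Ext_F^i(X,Z) ≅ Ext^i_C(FX, FZ), where Ext_F denotes the extension groups of the exact structure on ℰ given by the F-exact sequences. -/

import Mathlib

noncomputable section
open CategoryTheory Limits Pretriangulated

universe v u v' u'

/-! ### Generic tools in a `k`-linear category -/

section LinearTools

variable (k : Type) [Field k]
variable (D : Type u) [Category.{v} D] [Preadditive D] [CategoryTheory.Linear k D]
  [HasZeroObject D] [HasFiniteBiproducts D] [HasBinaryBiproducts D]

/-- An object is indecomposable if it is non-zero and admits no non-trivial direct sum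
decomposition. -/
def Indec (X : D) : Prop :=
  ¬ IsZero X ∧ ∀ Y Z : D, Nonempty (X ≅ Y ⊞ Z) → IsZero Y ∨ IsZero Z

/-- `X` lies in `add T`: it is a direct factor of a finite direct sum of copies of `T`. -/
def InAdd (T X : D) : Prop :=
  ∃ (m : ℕ) (Z : D), Nonempty ((X ⊞ Z) ≅ (⨁ fun _ : Fin m => T))

/-- The indecomposable `U` occurs with multiplicity `m` as a direct factor of `Y`. -/
def HasMult (U Y : D) (m : ℕ) : Prop :=
  ∃ Y' : D, Nonempty (Y ≅ (⨁ fun _ : Fin m => U) ⊞ Y') ∧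
    ¬ ∃ Z : D, Nonempty (Y' ≅ U ⊞ Z)

/-- The radical: `f ∈ rad(X,Y)` iff `𝟙 X - f ≫ g` is invertible for all `g : Y ⟶ X`. -/
def radSet (X Y : D) : Set (X ⟶ Y) := {f | ∀ g : Y ⟶ X, IsIso (𝟙 X - f ≫ g)}

def radSub (X Y : D) : Submodule k (X ⟶ Y) := Submodule.span k (radSet D X Y)

/-- The square of the radical, relative to a class `T` of middle objects. -/
def radSqSub (T : Set D) (X Y : D) : Submodule k (X ⟶ Y) :=
  Submodule.span k
    {h | ∃ Z ∈ T, ∃ f : X ⟶ Z, ∃ g : Z ⟶ Y, f ∈ radSet D X Z ∧ g ∈ radSet D Z Y ∧ h = f ≫ g}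

/-- Number of arrows from `X` to `Y` in the quiver of the subcategory `T`:
`dim_k rad(X,Y)/rad²(X,Y)`. -/
def numArrows (T : Set D) (X Y : D) : ℕ :=
  Module.finrank k
    (↥(radSub k D X Y) ⧸ Submodule.comap (radSub k D X Y).subtype (radSqSub k D T X Y))

/-- Entry of the antisymmetric matrix attached to the quiver of the subcategory `T`. -/
def bmat (T : Set D) (X Y : D) : ℤ :=
  (numArrows k D T X Y : ℤ) - numArrows k D T Y X

/-- Entries of the antisymmetric matrix of the quiver of the endomorphism algebra of the
object `⨁ Tob i`. -/
def bmatOf {n : ℕ} (Tob : Fin n → D) (i j : Fin n) : ℤ :=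
  bmat k D {Z : D | InAdd D (⨁ Tob) Z} (Tob i) (Tob j)

/-- The direct sum `⨁_i Tob i ^{a i}`. -/
def TT {n : ℕ} (Tob : Fin n → D) (a : Fin n → ℕ) : D :=
  ⨁ fun p : (Σ i : Fin n, Fin (a i)) => Tob p.1

end LinearTools

/-! ### Exact and Frobenius structures (Quillen exact categories) -/

section Exact

variable (k : Type) [Field k]
variable (E : Type u) [Category.{v} E] [Preadditive E] [CategoryTheory.Linear k E]
  [HasZeroObject E] [HasFiniteBiproducts E] [HasBinaryBiproducts E]
  [∀ X Y : E, FiniteDimensional k (X ⟶ Y)]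

/-- An exact structure on the additive category `E`, given by its class of conflations
`0 → X →f Y →g Z → 0`. -/
structure ExStruct where
  IsConf : ∀ ⦃X Y Z : E⦄, (X ⟶ Y) → (Y ⟶ Z) → Prop
  comp_zero : ∀ {X Y Z : E} (f : X ⟶ Y) (g : Y ⟶ Z), IsConf f g → f ≫ g = 0
  is_kernel : ∀ {X Y Z : E} (f : X ⟶ Y) (g : Y ⟶ Z), IsConf f g →
      ∀ {W : E} (h : W ⟶ Y), h ≫ g = 0 → ∃! l : W ⟶ X, l ≫ f = h
  is_cokernel : ∀ {X Y Z : E} (f : X ⟶ Y) (g : Y ⟶ Z), IsConf f g →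
      ∀ {W : E} (h : Y ⟶ W), f ≫ h = 0 → ∃! l : Z ⟶ W, g ≫ l = h
  split_conf : ∀ X Z : E, IsConf (biprod.inl : X ⟶ X ⊞ Z) (biprod.snd : X ⊞ Z ⟶ Z)
  iso_closed : ∀ {X Y Z X' Y' Z' : E} (f : X ⟶ Y) (g : Y ⟶ Z)
      (iX : X' ≅ X) (iY : Y' ≅ Y) (iZ : Z' ≅ Z), IsConf f g →
      IsConf (iX.hom ≫ f ≫ iY.inv) (iY.hom ≫ g ≫ iZ.inv)
  defl_comp : ∀ {X Y Z X' Y' : E} (f : X ⟶ Y) (g : Y ⟶ Z) (f' : X' ⟶ Y') (g' : Y' ⟶ Y),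
      IsConf f g → IsConf f' g' → ∃ (K : E) (u : K ⟶ Y'), IsConf u (g' ≫ g)

variable {E}

/-- `P` is projective for the exact structure `ε`. -/
def ExStruct.Proj (ε : ExStruct E) (P : E) : Prop :=
  ∀ {X Y Z : E} (f : X ⟶ Y) (g : Y ⟶ Z), ε.IsConf f g → ∀ h : P ⟶ Z, ∃ l : P ⟶ Y, l ≫ g = h

/-- `I` is injective for the exact structure `ε`. -/
def ExStruct.Inj (ε : ExStruct E) (I : E) : Prop :=
  ∀ {X Y Z : E} (f : X ⟶ Y) (g : Y ⟶ Z), ε.IsConf f g → ∀ h : X ⟶ I, ∃ l : Y ⟶ I, f ≫ l = h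

/-- `Ext¹_ε(A, X) = 0`: every conflation `0 → X → M → A → 0` splits. -/
def ExStruct.Ext1Zero (ε : ExStruct E) (A X : E) : Prop :=
  ∀ {M : E} (f : X ⟶ M) (g : M ⟶ A), ε.IsConf f g → ∃ s : A ⟶ M, s ≫ g = 𝟙 A

/-- `X` is a rigid object: `Ext¹_ε(X, X) = 0`. -/
def ExStruct.Rigid (ε : ExStruct E) (X : E) : Prop := ε.Ext1Zero X X

/-- `ε` makes `E` a Frobenius category: it has enough projectives and enough injectives,
and projectives and injectives coincide. -/
structure ExStruct.IsFrobenius (ε : ExStruct E) : Prop where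
  enough_proj : ∀ X : E, ∃ (P K : E) (g : P ⟶ X) (f : K ⟶ P), ε.Proj P ∧ ε.IsConf f g
  enough_inj : ∀ X : E, ∃ (I CK : E) (f : X ⟶ I) (g : I ⟶ CK), ε.Inj I ∧ ε.IsConf f g
  proj_iff_inj : ∀ P : E, ε.Proj P ↔ ε.Inj P

/-- `T` is a cluster-tilting object of `(E, ε)`: it is rigid and `X ∈ add T` iff
`Ext¹_ε(T, X) = 0`. -/
def ExStruct.IsCT (ε : ExStruct E) (T : E) : Prop :=
  ε.Rigid T ∧ ∀ X : E, InAdd E T X ↔ ε.Ext1Zero T X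

/-- A conflation is `F`-exact (`F = Hom(T, ?)`) iff every map `T ⟶ Z` lifts along the
deflation. -/
def ExStruct.FExact (ε : ExStruct E) (T : E) {X Y Z : E} (f : X ⟶ Y) (g : Y ⟶ Z) : Prop :=
  ε.IsConf f g ∧ ∀ q : T ⟶ Z, ∃ l : T ⟶ Y, l ≫ g = q

/-- `g : Fin n → ℤ` is the index `ind_T(M)` with respect to the cluster-tilting object
`T = ⨁ Tob i`: there is a minimal conflation `0 → ⨁ Tob^b → ⨁ Tob^a → M → 0` whose
deflation is a (minimal) right `add T`-approximation, and `g = a - b`. -/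
def ExStruct.IsIndex (ε : ExStruct E) {n : ℕ} (Tob : Fin n → E) (M : E)
    (g : Fin n → ℤ) : Prop :=
  ∃ (a b : Fin n → ℕ) (f : TT E Tob b ⟶ TT E Tob a) (p : TT E Tob a ⟶ M),
    ε.IsConf f p ∧
    (∀ (i : Fin n) (q : Tob i ⟶ M), ∃ l : Tob i ⟶ TT E Tob a, l ≫ p = q) ∧
    (∀ φ : TT E Tob a ⟶ TT E Tob a, φ ≫ p = p → IsIso φ) ∧
    (∀ i, g i = (a i : ℤ) - (b i : ℤ))

/-- `X` has no non-zero `ε`-projective direct factor. -/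
def ExStruct.NoProjFactor (ε : ExStruct E) (X : E) : Prop :=
  ¬ ∃ P Z : E, ε.Proj P ∧ ¬ IsZero P ∧ Nonempty (X ≅ P ⊞ Z)

/-- One step of mutation of cluster-tilting objects of `(E, ε)`: two cluster-tilting
objects sharing all indecomposable direct factors except one non-projective one. -/
def ExStruct.CTMutRel (ε : ExStruct E) (R R' : E) : Prop :=
  ε.IsCT R ∧ ε.IsCT R' ∧
    ∃ Z M M' : E, Indec E M ∧ Indec E M' ∧ ¬ ε.Proj M ∧ ¬ ε.Proj M' ∧
      ¬ Nonempty (M ≅ M') ∧ Nonempty (R ≅ Z ⊞ M) ∧ Nonempty (R' ≅ Z ⊞ M')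

/-- The cluster-tilting object `R` is reachable from `T`. -/
def ExStruct.CTReachable (ε : ExStruct E) (T R : E) : Prop :=
  Relation.ReflTransGen ε.CTMutRel T R

/-- The indecomposable rigid object `M` is reachable from `T`. -/
def ExStruct.RigidReachable (ε : ExStruct E) (T M : E) : Prop :=
  ∃ R : E, ε.CTReachable T R ∧ InAdd E R M

/-- The cluster-tilting subcategories determine a cluster structure on the Frobenius
category `(E, ε)` in the sense of Buan–Iyama–Reiten–Scott (conditions (1)–(4), stated for
cluster-tilting objects). -/
structure ExStruct.ClusterStructure (ε : ExStruct E) : Prop where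
  /- (1) unique exchange: existence -/
  mut_exists : ∀ R Z M : E, ε.IsCT R → Indec E M → ¬ ε.Proj M → Nonempty (R ≅ Z ⊞ M) →
      ∃ M' : E, Indec E M' ∧ ¬ ε.Proj M' ∧ ¬ Nonempty (M' ≅ M) ∧ ε.IsCT (Z ⊞ M')
  /- (1) unique exchange: uniqueness -/
  mut_unique : ∀ R Z M : E, ε.IsCT R → Indec E M → ¬ ε.Proj M → Nonempty (R ≅ Z ⊞ M) →
      ∀ M₁ M₂ : E, Indec E M₁ → ¬ Nonempty (M₁ ≅ M) → ε.IsCT (Z ⊞ M₁) →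
        Indec E M₂ → ¬ Nonempty (M₂ ≅ M) → ε.IsCT (Z ⊞ M₂) → Nonempty (M₁ ≅ M₂)
  /- (2) exchange conflations with minimal approximations -/
  exch_confl : ∀ Z M M' : E, Indec E M → Indec E M' → ¬ Nonempty (M' ≅ M) →
      ε.IsCT (Z ⊞ M) → ε.IsCT (Z ⊞ M') →
      ∃ (Y Y' : E) (f : M' ⟶ Y) (g : Y ⟶ M) (s : M ⟶ Y') (t : Y' ⟶ M'),
        ε.IsConf f g ∧ ε.IsConf s t ∧ InAdd E Z Y ∧ InAdd E Z Y' ∧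
        (∀ (U : E) (q : U ⟶ M), InAdd E Z U → ∃ l : U ⟶ Y, l ≫ g = q) ∧
        (∀ e : Y ⟶ Y, e ≫ g = g → IsIso e) ∧
        (∀ (U : E) (q : M' ⟶ U), InAdd E Z U → ∃ l : Y ⟶ U, f ≫ l = q) ∧
        (∀ e : Y ⟶ Y, f ≫ e = f → IsIso e) ∧
        (∀ (U : E) (q : U ⟶ M'), InAdd E Z U → ∃ l : U ⟶ Y', l ≫ t = q) ∧
        (∀ e : Y' ⟶ Y', e ≫ t = t → IsIso e) ∧
        (∀ (U : E) (q : M ⟶ U), InAdd E Z U → ∃ l : Y' ⟶ U, s ≫ l = q) ∧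
        (∀ e : Y' ⟶ Y', s ≫ e = s → IsIso e)
  /- (3) no loops and no 2-cycles in the quiver of any cluster-tilting object -/
  no_loops : ∀ R M : E, ε.IsCT R → Indec E M → InAdd E R M →
      numArrows k E {W : E | InAdd E R W} M M = 0
  no_two_cycles : ∀ R M N : E, ε.IsCT R → Indec E M → Indec E N →
      InAdd E R M → InAdd E R N → ¬ Nonempty (M ≅ N) →
      ¬ (0 < numArrows k E {W : E | InAdd E R W} M N ∧
         0 < numArrows k E {W : E | InAdd E R W} N M)
  /- (4) mutation of cluster-tilting objects is compatible with Fomin–Zelevinsky mutation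
  of the matrices of the quivers `Q°` (arrows between projective vertices removed) -/
  quiver_mutation : ∀ Z M M' : E, Indec E M → Indec E M' → ¬ ε.Proj M → ¬ ε.Proj M' →
      ¬ Nonempty (M' ≅ M) → ε.IsCT (Z ⊞ M) → ε.IsCT (Z ⊞ M') →
      (∀ X Y : E, Indec E X → Indec E Y → InAdd E Z X → InAdd E Z Y →
        ¬ (ε.Proj X ∧ ε.Proj Y) →
          bmat k E {W : E | InAdd E (Z ⊞ M') W} X Y =
            bmat k E {W : E | InAdd E (Z ⊞ M) W} X Y +
              (bmat k E {W : E | InAdd E (Z ⊞ M) W} X M).sign *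
                max (bmat k E {W : E | InAdd E (Z ⊞ M) W} X M *
                     bmat k E {W : E | InAdd E (Z ⊞ M) W} M Y) 0) ∧
      (∀ X : E, Indec E X → InAdd E Z X →
          bmat k E {W : E | InAdd E (Z ⊞ M') W} X M' =
            - bmat k E {W : E | InAdd E (Z ⊞ M) W} X M ∧
          bmat k E {W : E | InAdd E (Z ⊞ M') W} M' X =
            - bmat k E {W : E | InAdd E (Z ⊞ M) W} M X)

end Exact

/-! ### The stable category: a 2-Calabi–Yau triangulated quotient -/

section Stable

variable (k : Type) [Field k]
variable (E : Type u) [Category.{v} E] [Preadditive E] [CategoryTheory.Linear k E]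
  [HasZeroObject E] [HasFiniteBiproducts E] [HasBinaryBiproducts E]
  [∀ X Y : E, FiniteDimensional k (X ⟶ Y)]
variable (Cst : Type u') [Category.{v'} Cst] [Preadditive Cst]
  [CategoryTheory.Linear k Cst] [HasZeroObject Cst] [HasShift Cst ℤ]
  [∀ n : ℤ, (CategoryTheory.shiftFunctor Cst n).Additive] [Pretriangulated Cst]
  [HasFiniteBiproducts Cst] [∀ X Y : Cst, FiniteDimensional k (X ⟶ Y)]

/-- The triangulated category `Cst` is 2-Calabi–Yau: a family of linear trace forms
makes the composition pairings `C(Y, Σ²X) × C(X, Y) → k` non-degenerate. -/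
def IsTwoCYst : Prop :=
  ∃ t : ∀ X : Cst, (X ⟶ X⟦(2 : ℤ)⟧) →ₗ[k] k,
    ∀ X Y : Cst,
      (∀ f : Y ⟶ X⟦(2 : ℤ)⟧, (∀ g : X ⟶ Y, t X (g ≫ f) = 0) → f = 0) ∧
      (∀ g : X ⟶ Y, (∀ f : Y ⟶ X⟦(2 : ℤ)⟧, t X (g ≫ f) = 0) → g = 0)

variable {E Cst}

/-- `π : E ⥤ Cst` realizes the triangulated category `Cst` as the stable category of the
Frobenius category `(E, ε)`. -/
structure IsStableQuotient (ε : ExStruct E) (π : E ⥤ Cst) : Prop where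
  ess_surj : ∀ Y : Cst, ∃ X : E, Nonempty (π.obj X ≅ Y)
  full : ∀ X Y : E, Function.Surjective (π.map : (X ⟶ Y) → (π.obj X ⟶ π.obj Y))
  map_eq_zero_iff : ∀ (X Y : E) (f : X ⟶ Y), π.map f = 0 ↔
      ∃ (P : E) (p : X ⟶ P) (q : P ⟶ Y), ε.Proj P ∧ p ≫ q = f
  additive : ∀ (X Y : E) (f g : X ⟶ Y), π.map (f + g) = π.map f + π.map g
  conf_triangle : ∀ {X Y Z : E} (f : X ⟶ Y) (g : Y ⟶ Z), ε.IsConf f g →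
      ∃ δ : π.obj Z ⟶ (π.obj X)⟦(1 : ℤ)⟧,
        Triangle.mk (π.map f) (π.map g) δ ∈ distTriang Cst

/-- `dim_k Ext¹_ℰ(L, M) = d`, computed in the stable category as
`dim_k Hom(π L, (π M)[1])`. -/
def Ext1DimEq (π : E ⥤ Cst) (L M : E) (d : ℕ) : Prop :=
  Module.finrank k (π.obj L ⟶ (π.obj M)⟦(1 : ℤ)⟧) = d

end Stable

/-! ### Modules over the endomorphism algebra, and `F`-exact projective resolutions -/

section ModSide

variable {k : Type} [Field k]
variable {E : Type u} [Category.{v} E] [Preadditive E] [CategoryTheory.Linear k E]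

/-- `Hom_ℰ(T, X)` as a left module over `C = (End T)ᵐᵒᵖ`, via precomposition; this is the
value `F X` of the functor `F = Hom_ℰ(T, ?) : ℰ → mod C`. -/
instance homModule (T X : E) : Module (End T)ᵐᵒᵖ (T ⟶ X) where
  smul φ f := φ.unop ≫ f
  one_smul f := Category.id_comp f
  mul_smul a b f := Category.assoc _ _ _
  smul_zero φ := Limits.comp_zero
  smul_add φ f g := Preadditive.comp_add _ _ _ _ _ _
  add_smul a b f := Preadditive.add_comp _ _ _ _ _ _
  zero_smul f := Limits.zero_comp

/-- The `C`-module `F X = Hom_ℰ(T, X)`. -/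
def Fmod (T X : E) : ModuleCat (End T)ᵐᵒᵖ := ModuleCat.of _ (T ⟶ X)

/-- Precomposition with `f`, as a `k`-linear map between Hom spaces. -/
def precompLin (k : Type) [Field k] {D : Type u} [Category.{v} D] [Preadditive D]
    [CategoryTheory.Linear k D] {A B : D} (f : A ⟶ B) (Z : D) :
    (B ⟶ Z) →ₗ[k] (A ⟶ Z) where
  toFun h := f ≫ h
  map_add' h h' := Preadditive.comp_add _ _ _ _ _ _
  map_smul' a h := by simp

end ModSide

section FRes

variable {k : Type} [Field k]
variable {E : Type u} [Category.{v} E] [Preadditive E] [CategoryTheory.Linear k E]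
  [HasZeroObject E] [HasFiniteBiproducts E] [HasBinaryBiproducts E]
  [∀ X Y : E, FiniteDimensional k (X ⟶ Y)]

/-- A projective resolution of `X` for the exact structure on `ℰ` given by the `F`-exact
conflations (`F = Hom(T, ?)`): the projectives of this exact structure are the objects of
`add T`, and the resolution is spliced from `F`-exact conflations
`0 → K_{m+1} → P_m → K_m → 0` with `K_0 = X`. -/
structure FProjRes (ε : ExStruct E) (T X : E) where
  P : ℕ → E
  K : ℕ → E
  iso0 : K 0 ≅ X
  ι : ∀ m : ℕ, K (m + 1) ⟶ P m
  pr : ∀ m : ℕ, P m ⟶ K m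
  conf : ∀ m, ε.IsConf (ι m) (pr m)
  fexact : ∀ m, ∀ q : T ⟶ K m, ∃ l : T ⟶ P m, l ≫ pr m = q
  projT : ∀ m, InAdd E T (P m)

end FRes

/-! ### Auxiliary development for statement 9 -/

section FKAux

variable {k : Type} [Field k]
variable {E : Type u} [Category.{v} E] [Preadditive E] [CategoryTheory.Linear k E]
  [HasZeroObject E] [HasFiniteBiproducts E] [HasBinaryBiproducts E]
  [∀ X Y : E, FiniteDimensional k (X ⟶ Y)]

set_option linter.unusedSectionVars false
namespace FK

variable (T : E)

/-- The functor `F = Hom(T, ?)` on morphisms. -/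
def FHom {X Y : E} (f : X ⟶ Y) : Fmod T X ⟶ Fmod T Y := ModuleCat.ofHom {
  toFun := fun t => t ≫ f
  map_add' := fun _ _ => Preadditive.add_comp _ _ _ _ _ _
  map_smul' := fun _ _ => Category.assoc _ _ _ }

@[simp] lemma FHom_apply {X Y : E} (f : X ⟶ Y) (t : T ⟶ X) : FHom T f t = t ≫ f := rfl

lemma FHom_zero {X Y : E} : FHom T (0 : X ⟶ Y) = 0 := by
  ext t
  show t ≫ (0 : X ⟶ Y) = (0 : Fmod T X ⟶ Fmod T Y) t
  erw [comp_zero]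
  exact (LinearMap.zero_apply t).symm

lemma FHom_comp {X Y W : E} (f : X ⟶ Y) (g : Y ⟶ W) :
    FHom T (f ≫ g) = FHom T f ≫ FHom T g := by
  ext t
  exact (Category.assoc _ _ _).symm

lemma FHom_id (X : E) : FHom T (𝟙 X) = 𝟙 (Fmod T X) := by
  ext t
  exact Category.comp_id _

variable {ε : ExStruct E}

lemma conf_mono {X Y W : E} {f : X ⟶ Y} {g : Y ⟶ W} (h : ε.IsConf f g) : Mono f := by
  constructor
  intro A u v huv
  have h0 : (u ≫ f) ≫ g = 0 := by rw [Category.assoc, ε.comp_zero f g h, comp_zero]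
  obtain ⟨l, _, hu⟩ := ε.is_kernel f g h (u ≫ f) h0
  rw [hu u rfl, hu v huv.symm]

lemma conf_epi {X Y W : E} {f : X ⟶ Y} {g : Y ⟶ W} (h : ε.IsConf f g) : Epi g := by
  constructor
  intro A u v huv
  have h0 : f ≫ (g ≫ u) = 0 := by
    rw [← Category.assoc, ε.comp_zero f g h, zero_comp]
  obtain ⟨l, _, hu⟩ := ε.is_cokernel f g h (g ≫ u) h0
  rw [hu u rfl, hu v huv.symm]

variable {T}

lemma add_faithful {P W : E} (hP : InAdd E T P) (h : P ⟶ W)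
    (hc : ∀ t : T ⟶ P, t ≫ h = 0) : h = 0 := by
  obtain ⟨m, Z', ⟨e⟩⟩ := hP
  have hq : e.inv ≫ biprod.fst ≫ h = 0 := by
    apply biproduct.hom_ext'
    intro j
    have := hc (biproduct.ι (fun _ : Fin m => T) j ≫ e.inv ≫ biprod.fst)
    simpa using this
  calc h = biprod.inl ≫ e.hom ≫ e.inv ≫ biprod.fst ≫ h := by simp
  _ = biprod.inl ≫ e.hom ≫ 0 := by rw [hq]
  _ = 0 := by simp

lemma add_full {P W : E} (hP : InAdd E T P) (β : Fmod T P ⟶ Fmod T W) :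
    ∃ g : P ⟶ W, ∀ t : T ⟶ P, β t = t ≫ g := by
  obtain ⟨m, Z', ⟨e⟩⟩ := hP
  unfold Fmod at β
  have hsm : ∀ (c : T ⟶ T) (y : T ⟶ P), β (c ≫ y) = c ≫ β y := by
    intro c y
    exact β.hom.map_smul (MulOpposite.op c) y
  set tc : Fin m → (T ⟶ P) :=
    fun j => biproduct.ι (fun _ : Fin m => T) j ≫ e.inv ≫ biprod.fst with htc
  refine ⟨biprod.inl ≫ e.hom ≫ biproduct.desc (fun j => β (tc j)), fun t => ?_⟩
  have key : ∀ u : T ⟶ ⨁ (fun _ : Fin m => T),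
      u ≫ biproduct.desc (fun j => β (tc j)) = β (u ≫ e.inv ≫ biprod.fst) := by
    intro u
    calc u ≫ biproduct.desc (fun j => β (tc j))
        = u ≫ (∑ j : Fin m, biproduct.π (fun _ : Fin m => T) j ≫
            biproduct.ι (fun _ : Fin m => T) j) ≫ biproduct.desc (fun j => β (tc j)) := by
          rw [biproduct.total, Category.id_comp]
      _ = ∑ j : Fin m, (u ≫ biproduct.π (fun _ : Fin m => T) j) ≫ β (tc j) := by
          rw [Preadditive.sum_comp, Preadditive.comp_sum]
          simp
      _ = ∑ j : Fin m, β ((u ≫ biproduct.π (fun _ : Fin m => T) j) ≫ tc j) := by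
          simp_rw [hsm]
      _ = β (∑ j : Fin m, (u ≫ biproduct.π (fun _ : Fin m => T) j) ≫ tc j) :=
          (map_sum β.hom _ _).symm
      _ = β (u ≫ e.inv ≫ biprod.fst) := by
          congr 1
          calc ∑ j : Fin m, (u ≫ biproduct.π (fun _ : Fin m => T) j) ≫ tc j
              = u ≫ (∑ j : Fin m, biproduct.π (fun _ : Fin m => T) j ≫
                  biproduct.ι (fun _ : Fin m => T) j) ≫ e.inv ≫ biprod.fst := by
                rw [Preadditive.sum_comp, Preadditive.comp_sum]
                simp [htc]
            _ = u ≫ e.inv ≫ biprod.fst := by rw [biproduct.total, Category.id_comp]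
  calc β t = β (t ≫ biprod.inl ≫ e.hom ≫ e.inv ≫ biprod.fst) := by simp
    _ = (t ≫ biprod.inl ≫ e.hom) ≫ biproduct.desc (fun j => β (tc j)) := by
        rw [key]
        simp
    _ = t ≫ biprod.inl ≫ e.hom ≫ biproduct.desc (fun j => β (tc j)) := by
        simp [Category.assoc]

lemma proj_of_retract {D : Type*} [Category D] {P Q : D} (i : P ⟶ Q) (r : Q ⟶ P)
    (hir : i ≫ r = 𝟙 P) (_ : Projective Q) : Projective P where
  factors f e he :=
    ⟨i ≫ Projective.factorThru (r ≫ f) e, by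
      rw [Category.assoc, Projective.factorThru_comp, ← Category.assoc, hir,
        Category.id_comp]⟩

/-- `Hom(T, ⨁ T^m)` is the free module of rank `m` over `(End T)ᵐᵒᵖ`. -/
def biprodFmodEquiv (m : ℕ) :
    (T ⟶ ⨁ (fun _ : Fin m => T)) ≃ₗ[(End T)ᵐᵒᵖ] (Fin m → (End T)ᵐᵒᵖ) where
  toFun t := fun j => MulOpposite.op (t ≫ biproduct.π (fun _ : Fin m => T) j)
  map_add' a b := by
    funext j
    simp [Preadditive.add_comp]
  map_smul' c t := by
    funext j
    show MulOpposite.op ((c.unop ≫ t) ≫ biproduct.π (fun _ : Fin m => T) j) =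
      c * (MulOpposite.op (t ≫ biproduct.π (fun _ : Fin m => T) j) : (End T)ᵐᵒᵖ)
    rw [Category.assoc]
    rfl
  invFun v := ∑ j : Fin m, (v j).unop ≫ biproduct.ι (fun _ : Fin m => T) j
  left_inv t := by
    have : ∑ j : Fin m, (t ≫ biproduct.π (fun _ : Fin m => T) j) ≫
        biproduct.ι (fun _ : Fin m => T) j = t := by
      calc ∑ j : Fin m, (t ≫ biproduct.π (fun _ : Fin m => T) j) ≫
          biproduct.ι (fun _ : Fin m => T) j
          = t ≫ ∑ j : Fin m, biproduct.π (fun _ : Fin m => T) j ≫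
            biproduct.ι (fun _ : Fin m => T) j := by
            rw [Preadditive.comp_sum]
            simp [Category.assoc]
        _ = t := by rw [biproduct.total, Category.comp_id]
    simpa using this
  right_inv v := by
    funext j
    have : (∑ i : Fin m, (v i).unop ≫ biproduct.ι (fun _ : Fin m => T) i) ≫
        biproduct.π (fun _ : Fin m => T) j = (v j).unop := by
      rw [Preadditive.sum_comp]
      rw [Finset.sum_eq_single j]
      · simp
      · intro b _ hb
        rw [Category.assoc, biproduct.ι_π_ne _ hb, comp_zero]
      · intro hj
        exact absurd (Finset.mem_univ j) hj
    simp only [this, MulOpposite.op_unop]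

lemma add_proj {P : E} (hP : InAdd E T P) : Projective (Fmod T P) := by
  obtain ⟨m, Z', ⟨e⟩⟩ := hP
  have h1 : Projective (ModuleCat.of (End T)ᵐᵒᵖ (Fin m → (End T)ᵐᵒᵖ)) :=
    (IsProjective.iff_projective _).mp inferInstance
  have h2 : Projective (Fmod T (⨁ (fun _ : Fin m => T))) :=
    Projective.of_iso (biprodFmodEquiv (T := T) m).symm.toModuleIso h1
  refine proj_of_retract (FHom T (biprod.inl ≫ e.hom)) (FHom T (e.inv ≫ biprod.fst)) ?_ h2
  rw [← FHom_comp]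
  have : (biprod.inl ≫ e.hom) ≫ e.inv ≫ biprod.fst = 𝟙 P := by simp
  rw [this, FHom_id]

variable (T)

lemma smul_FmodHom_apply {X W : E} (a : k) (h : Fmod T X ⟶ Fmod T W) (t : T ⟶ X) :
    (a • h) t = (a • 𝟙 T) ≫ h t := by
  have h1 : (a • h) t = (algebraMap k (End T)ᵐᵒᵖ a).unop ≫ h t := rfl
  rw [h1, MulOpposite.algebraMap_apply, MulOpposite.unop_op,
    Algebra.algebraMap_eq_smul_one]
  rfl

variable (k)

/-- The natural map `Hom(X, W) → Hom_C(F X, F W)`, as a `k`-linear map. -/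
def Phi (X W : E) : (X ⟶ W) →ₗ[k] (Fmod T X ⟶ Fmod T W) where
  toFun f := FHom T f
  map_add' f g := by
    ext t
    show t ≫ (f + g) = (FHom T f) t + (FHom T g) t
    exact Preadditive.comp_add _ _ _ _ _ _
  map_smul' a f := by
    ext t
    show t ≫ (a • f) = (a • FHom T f) t
    erw [smul_FmodHom_apply, FHom_apply, CategoryTheory.Linear.smul_comp,
      Category.id_comp, CategoryTheory.Linear.comp_smul]

@[simp] lemma Phi_apply (X W : E) (f : X ⟶ W) : Phi k T X W f = FHom T f := rfl

lemma Phi_bijective {P₀ X : E} (hP₀ : InAdd E T P₀) (p : P₀ ⟶ X) (hepi : Epi p)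
    (hsurj : ∀ t : T ⟶ X, ∃ l : T ⟶ P₀, l ≫ p = t)
    (hfact : ∀ {W : E} (h : P₀ ⟶ W), (∀ t : T ⟶ P₀, t ≫ p = 0 → t ≫ h = 0) →
      ∃ f : X ⟶ W, p ≫ f = h)
    (W : E) : Function.Bijective (Phi k T X W) := by
  have hinj : ∀ f : X ⟶ W, (∀ t : T ⟶ X, t ≫ f = 0) → f = 0 := by
    intro f hf
    have h1 : p ≫ f = 0 := by
      refine add_faithful hP₀ _ (fun t => ?_)
      rw [← Category.assoc]
      exact hf _
    rw [← cancel_epi p, h1, comp_zero]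
  constructor
  · intro f g hfg
    have hsub : f - g = 0 := by
      refine hinj _ (fun t => ?_)
      have h2 : t ≫ f = t ≫ g := DFunLike.congr_fun (congrArg ModuleCat.Hom.hom hfg) t
      rw [Preadditive.comp_sub, h2, sub_self]
    exact sub_eq_zero.mp hsub
  · intro α
    obtain ⟨g, hg⟩ := add_full hP₀ (FHom T p ≫ α)
    obtain ⟨f, hf⟩ := hfact g (fun t ht => by
      rw [← hg t]
      show α ((FHom T p) t) = 0
      rw [FHom_apply, ht]
      exact map_zero _)
    unfold Fmod at α hg
    refine ⟨f, ?_⟩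
    apply ModuleCat.hom_ext
    apply LinearMap.ext
    intro t
    obtain ⟨l, hl⟩ := hsurj t
    show t ≫ f = α t
    calc t ≫ f = t ≫ f := rfl
      _ = l ≫ p ≫ f := by rw [← hl, Category.assoc]
      _ = l ≫ g := by rw [hf]
      _ = (FHom T p ≫ α) l := (hg l).symm
      _ = α (l ≫ p) := rfl
      _ = α t := by rw [hl]

/-- Degree-0 comparison: `Hom(X, W) ≅ Hom_C(F X, F W)`. -/
def homEquiv {P₀ X : E} (hP₀ : InAdd E T P₀) (p : P₀ ⟶ X) (hepi : Epi p)
    (hsurj : ∀ t : T ⟶ X, ∃ l : T ⟶ P₀, l ≫ p = t)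
    (hfact : ∀ {W : E} (h : P₀ ⟶ W), (∀ t : T ⟶ P₀, t ≫ p = 0 → t ≫ h = 0) →
      ∃ f : X ⟶ W, p ≫ f = h)
    (W : E) : (X ⟶ W) ≃ₗ[k] (Fmod T X ⟶ Fmod T W) :=
  LinearEquiv.ofBijective _ (Phi_bijective k T hP₀ p hepi hsurj hfact W)

/-- Trivial degree-0 comparison for objects of `add T`. -/
def homEquivAdd {P : E} (hP : InAdd E T P) (W : E) :
    (P ⟶ W) ≃ₗ[k] (Fmod T P ⟶ Fmod T W) :=
  homEquiv k T hP (𝟙 P) inferInstance (fun t => ⟨t, Category.comp_id t⟩)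
    (fun h _ => ⟨h, Category.id_comp h⟩) W

/-! #### The induced projective resolution of `F X` over `C = End(T)ᵐᵒᵖ` -/

/-- The differential `P_{n+1} ⟶ P_n` of an `F`-exact projective resolution. -/
def resd {X : E} (R : FProjRes ε T X) (n : ℕ) : R.P (n + 1) ⟶ R.P n :=
  R.pr (n + 1) ≫ R.ι n

lemma resd_comp {X : E} (R : FProjRes ε T X) (n : ℕ) :
    resd T R (n + 1) ≫ resd T R n = 0 := by
  have h0 : R.ι (n + 1) ≫ R.pr (n + 1) ≫ R.ι n = 0 := by
    rw [← Category.assoc, ε.comp_zero _ _ (R.conf (n + 1)), zero_comp]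
  show (R.pr (n + 2) ≫ R.ι (n + 1)) ≫ R.pr (n + 1) ≫ R.ι n = 0
  rw [Category.assoc, h0, comp_zero]

lemma lift_ker {X : E} (R : FProjRes ε T X) (n : ℕ) {t : T ⟶ R.P n}
    (ht : t ≫ R.pr n = 0) : ∃ y : T ⟶ R.P (n + 1), y ≫ resd T R n = t := by
  obtain ⟨l, hl, -⟩ := ε.is_kernel (R.ι n) (R.pr n) (R.conf n) t ht
  obtain ⟨y, hy⟩ := R.fexact (n + 1) l
  refine ⟨y, ?_⟩
  show y ≫ R.pr (n + 1) ≫ R.ι n = t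
  rw [← Category.assoc, hy, hl]

/-- The chain complex `... ⟶ F P₂ ⟶ F P₁ ⟶ F P₀` of `C`-modules. -/
def FCcx {X : E} (R : FProjRes ε T X) : ChainComplex (ModuleCat (End T)ᵐᵒᵖ) ℕ :=
  ChainComplex.of (fun n => Fmod T (R.P n)) (fun n => FHom T (resd T R n))
    (fun n => by rw [← FHom_comp, resd_comp, FHom_zero])

lemma FCcx_d {X : E} (R : FProjRes ε T X) (n : ℕ) :
    (FCcx T R).d (n + 1) n = FHom T (resd T R n) :=
  ChainComplex.of_d (fun n => Fmod T (R.P n)) (fun n => FHom T (resd T R n)) n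

lemma FCcx_exactAt_succ {X : E} (R : FProjRes ε T X) (n : ℕ) :
    (FCcx T R).ExactAt (n + 1) := by
  rw [HomologicalComplex.exactAt_iff' _ (n + 2) (n + 1) n (by simp) (by simp)]
  rw [ShortComplex.moduleCat_exact_iff]
  intro x hx
  have hx' : x ≫ resd T R n = 0 := by
    have hd : ((FCcx T R).sc' (n + 2) (n + 1) n).g = (FCcx T R).d (n + 1) n := rfl
    have h1 : FHom T (resd T R n) x = 0 := by
      rw [← FCcx_d T R n]
      exact hx
    exact h1
  have h1 : x ≫ R.pr (n + 1) = 0 := by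
    haveI := conf_mono (R.conf n)
    have h2 : (x ≫ R.pr (n + 1)) ≫ R.ι n = 0 ≫ R.ι n := by
      erw [Category.assoc, zero_comp]
      exact hx'
    exact (cancel_mono (R.ι n)).mp h2
  obtain ⟨y, hy⟩ := lift_ker T R (n + 1) h1
  refine ⟨y, ?_⟩
  show (FCcx T R).d (n + 2) (n + 1) y = x
  rw [FCcx_d T R (n + 1)]
  exact hy

/-- The augmentation map of the resolution. -/
def FCπ {X : E} (R : FProjRes ε T X) :
    FCcx T R ⟶ (ChainComplex.single₀ (ModuleCat (End T)ᵐᵒᵖ)).obj (Fmod T X) :=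
  (ChainComplex.toSingle₀Equiv _ _).symm ⟨FHom T (R.pr 0 ≫ R.iso0.hom), by
    rw [FCcx_d T R 0]
    erw [← FHom_comp]
    have h2 : resd T R 0 ≫ R.pr 0 ≫ R.iso0.hom = 0 := by
      have h0 : R.ι 0 ≫ R.pr 0 ≫ R.iso0.hom = 0 := by
        rw [← Category.assoc, ε.comp_zero _ _ (R.conf 0), zero_comp]
      show (R.pr 1 ≫ R.ι 0) ≫ R.pr 0 ≫ R.iso0.hom = 0
      rw [Category.assoc, h0, comp_zero]
    rw [h2, FHom_zero]
    rfl⟩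

lemma FCπ_f0 {X : E} (R : FProjRes ε T X) :
    (FCπ T R).f 0 = FHom T (R.pr 0 ≫ R.iso0.hom) :=
  ChainComplex.toSingle₀Equiv_symm_apply_f_zero _ _

lemma FCπ_surj {X : E} (R : FProjRes ε T X) :
    Function.Surjective (FHom T (R.pr 0 ≫ R.iso0.hom)) := by
  intro t
  obtain ⟨l, hl⟩ := R.fexact 0 (t ≫ R.iso0.inv)
  refine ⟨l, ?_⟩
  show l ≫ R.pr 0 ≫ R.iso0.hom = t
  erw [← Category.assoc, hl, Category.assoc, Iso.inv_hom_id, Category.comp_id]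

/-- The `F`-exact projective resolution of `X` induces a projective resolution of
`F X` in `mod C`. -/
def FCres {X : E} (R : FProjRes ε T X) : ProjectiveResolution (Fmod T X) where
  complex := FCcx T R
  projective n := add_proj (R.projT n)
  π := FCπ T R
  quasiIso := ⟨fun n => by
    cases n with
    | zero =>
      rw [ChainComplex.quasiIsoAt₀_iff, ShortComplex.quasiIso_iff_of_zeros']
      · constructor
        · rw [ShortComplex.moduleCat_exact_iff]
          intro x hx
          have h1 : FHom T (R.pr 0 ≫ R.iso0.hom) x = 0 := by
            rw [← FCπ_f0 T R]
            exact hx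
          have hx' : x ≫ R.pr 0 = 0 := by
            have h1' : x ≫ R.pr 0 ≫ R.iso0.hom = 0 := h1
            haveI : Mono R.iso0.hom := inferInstance
            have h2 : (x ≫ R.pr 0) ≫ R.iso0.hom = 0 ≫ R.iso0.hom := by
              erw [Category.assoc, zero_comp]
              exact h1'
            exact (cancel_mono R.iso0.hom).mp h2
          obtain ⟨y, hy⟩ := lift_ker T R 0 hx'
          refine ⟨y, ?_⟩
          show (FCcx T R).d 1 0 y = x
          rw [FCcx_d T R 0]
          exact hy
        · show Epi ((FCπ T R).f 0)
          rw [FCπ_f0]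
          exact (ModuleCat.epi_iff_surjective _).mpr (FCπ_surj T R)
      all_goals rfl
    | succ n =>
      rw [quasiIsoAt_iff_exactAt' (FCπ T R) (n + 1)
        (ChainComplex.exactAt_succ_single_obj _ _)]
      exact FCcx_exactAt_succ T R n⟩

/-! #### Comparison of `Ext` groups in positive degrees -/

lemma FHom_eq_zero {P W : E} (hP : InAdd E T P) {ψ : P ⟶ W} (h : FHom T ψ = 0) :
    ψ = 0 :=
  add_faithful hP ψ (fun t => by
    have h1 := DFunLike.congr_fun (congrArg ModuleCat.Hom.hom h) t
    exact h1)

lemma homCx_d_eq {X : E} (R : FProjRes ε T X) (Z : E) (a : ℕ)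
    (h : Fmod T (R.P a) ⟶ Fmod T Z) :
    (((FCcx T R).linearYonedaObj k (Fmod T Z)).d a (a + 1)) h
      = FHom T (resd T R a) ≫ h := by
  have hd := ChainComplex.linearYonedaObj_d (FCcx T R) k (Fmod T Z) a (a + 1)
  rw [hd]
  show (FCcx T R).d (a + 1) a ≫ h = FHom T (resd T R a) ≫ h
  rw [FCcx_d T R a]
  rfl

lemma ext_equiv {X : E} (R : FProjRes ε T X) (Z : E) (i : ℕ) :
    Nonempty (((R.K (i + 1) ⟶ Z) ⧸ LinearMap.range (precompLin k (R.ι i) Z)) ≃ₗ[k]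
      (((Ext k (ModuleCat (End T)ᵐᵒᵖ) (i + 1)).obj
          (Opposite.op (Fmod T X))).obj (Fmod T Z))) := by
  classical
  set HomCx := (FCcx T R).linearYonedaObj k (Fmod T Z) with hHomCx
  set S := HomCx.sc' i (i + 1) (i + 2) with hSdef
  -- the underlying map to cycles
  let Θ₀ : (R.K (i + 1) ⟶ Z) →ₗ[k] (Fmod T (R.P (i + 1)) ⟶ Fmod T Z) :=
    (Phi k T (R.P (i + 1)) Z).comp (precompLin k (R.pr (i + 1)) Z)
  have hΘ₀ : ∀ u : R.K (i + 1) ⟶ Z, Θ₀ u = FHom T (R.pr (i + 1) ≫ u) := fun u => rfl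
  have hSg : ∀ h : Fmod T (R.P (i + 1)) ⟶ Fmod T Z,
      S.g h = FHom T (resd T R (i + 1)) ≫ h :=
    fun h => homCx_d_eq k T R Z (i + 1) h
  have hSf : ∀ h : Fmod T (R.P i) ⟶ Fmod T Z,
      S.f h = FHom T (resd T R i) ≫ h :=
    fun h => homCx_d_eq k T R Z i h
  have hmem : ∀ u : R.K (i + 1) ⟶ Z, Θ₀ u ∈ LinearMap.ker S.g.hom := by
    intro u
    have hcomp : FHom T (resd T R (i + 1)) ≫ FHom T (R.pr (i + 1) ≫ u) = 0 := by
      rw [← FHom_comp]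
      have hz : resd T R (i + 1) ≫ R.pr (i + 1) ≫ u = 0 := by
        have h0 : R.ι (i + 1) ≫ R.pr (i + 1) ≫ u = 0 := by
          rw [← Category.assoc, ε.comp_zero _ _ (R.conf (i + 1)), zero_comp]
        show (R.pr (i + 2) ≫ R.ι (i + 1)) ≫ R.pr (i + 1) ≫ u = 0
        rw [Category.assoc, h0, comp_zero]
      rw [hz, FHom_zero]
    exact (LinearMap.mem_ker (f := S.g.hom)).mpr
      ((hSg (FHom T (R.pr (i + 1) ≫ u))).trans hcomp)
  let Θ : (R.K (i + 1) ⟶ Z) →ₗ[k] ↥(LinearMap.ker S.g.hom) := Θ₀.codRestrict _ hmem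
  have hΘinj : Function.Injective Θ := by
    intro u v huv
    have h1 : Θ₀ u = Θ₀ v := Subtype.ext_iff.mp huv
    have h2 : R.pr (i + 1) ≫ u - R.pr (i + 1) ≫ v = 0 := by
      refine add_faithful (R.projT (i + 1)) _ (fun t => ?_)
      have h3 : t ≫ (R.pr (i + 1) ≫ u) = t ≫ (R.pr (i + 1) ≫ v) :=
        DFunLike.congr_fun (congrArg ModuleCat.Hom.hom h1) t
      rw [Preadditive.comp_sub, h3, sub_self]
    have h4 : R.pr (i + 1) ≫ u = R.pr (i + 1) ≫ v := by rwa [sub_eq_zero] at h2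
    haveI := conf_epi (R.conf (i + 1))
    exact (cancel_epi (R.pr (i + 1))).mp h4
  have hΘsurj : Function.Surjective Θ := by
    rintro ⟨h, hh⟩
    rw [LinearMap.mem_ker] at hh
    set g' := (homEquivAdd k T (R.projT (i + 1)) Z).symm h with hg'def
    have hg'h : FHom T g' = h :=
      (homEquivAdd k T (R.projT (i + 1)) Z).apply_symm_apply h
    have h1 : resd T R (i + 1) ≫ g' = 0 := by
      refine FHom_eq_zero T (R.projT (i + 2)) ?_
      rw [FHom_comp, hg'h, ← hSg h]
      exact hh
    have h5 : R.ι (i + 1) ≫ g' = 0 := by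
      haveI := conf_epi (R.conf (i + 2))
      refine (cancel_epi (R.pr (i + 2))).mp ?_
      show R.pr (i + 2) ≫ R.ι (i + 1) ≫ g' = R.pr (i + 2) ≫ 0
      rw [comp_zero, ← Category.assoc]
      exact h1
    obtain ⟨l, hl, -⟩ := ε.is_cokernel (R.ι (i + 1)) (R.pr (i + 1)) (R.conf (i + 1)) g' h5
    refine ⟨l, ?_⟩
    apply Subtype.ext
    show FHom T (R.pr (i + 1) ≫ l) = h
    rw [hl, hg'h]
  let Θe : (R.K (i + 1) ⟶ Z) ≃ₗ[k] ↥(LinearMap.ker S.g.hom) :=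
    LinearEquiv.ofBijective Θ ⟨hΘinj, hΘsurj⟩
  have hassoc : ∀ w : R.P i ⟶ Z, resd T R i ≫ w = R.pr (i + 1) ≫ R.ι i ≫ w := by
    intro w
    show (R.pr (i + 1) ≫ R.ι i) ≫ w = _
    rw [Category.assoc]
  have hrange : Submodule.map Θe.toLinearMap (LinearMap.range (precompLin k (R.ι i) Z))
      = LinearMap.range S.moduleCatToCycles := by
    apply le_antisymm
    · rintro x hx
      obtain ⟨u, hu, rfl⟩ := Submodule.mem_map.mp hx
      obtain ⟨w, rfl⟩ := LinearMap.mem_range.mp hu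
      refine LinearMap.mem_range.mpr ⟨FHom T w, ?_⟩
      apply Subtype.ext
      show S.f (FHom T w) = Θ₀ (precompLin k (R.ι i) Z w)
      rw [hSf (FHom T w), ← FHom_comp, hΘ₀, hassoc w]
      rfl
    · rintro x hx
      obtain ⟨h', rfl⟩ := LinearMap.mem_range.mp hx
      set w := (homEquivAdd k T (R.projT i) Z).symm h' with hwdef
      have hw : FHom T w = h' :=
        (homEquivAdd k T (R.projT i) Z).apply_symm_apply h'
      refine Submodule.mem_map.mpr
        ⟨R.ι i ≫ w, LinearMap.mem_range.mpr ⟨w, rfl⟩, ?_⟩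
      apply Subtype.ext
      show Θ₀ (R.ι i ≫ w) = S.f h'
      rw [hSf h', ← hw, ← FHom_comp, hΘ₀, hassoc w]
  let q1 : ((R.K (i + 1) ⟶ Z) ⧸ LinearMap.range (precompLin k (R.ι i) Z)) ≃ₗ[k]
      (↥(LinearMap.ker S.g.hom) ⧸ LinearMap.range S.moduleCatToCycles) :=
    Submodule.Quotient.equiv _ _ Θe hrange
  let eIso : (((Ext k (ModuleCat (End T)ᵐᵒᵖ) (i + 1)).obj
      (Opposite.op (Fmod T X))).obj (Fmod T Z)) ≅ S.moduleCatLeftHomologyData.H :=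
    (FCres T R).isoExt (i + 1) (Fmod T Z) ≪≫
      HomCx.homologyIsoSc' i (i + 1) (i + 2) (by simp) (by simp) ≪≫
      S.moduleCatHomologyIso
  exact ⟨q1.trans eIso.toLinearEquiv.symm⟩

end FK

end FKAux

/-! ### Setting: a Hom-finite Frobenius category whose stable category is 2-Calabi–Yau -/

variable {k : Type} [Field k]
variable {E : Type u} [Category.{v} E] [Preadditive E] [CategoryTheory.Linear k E]
  [HasZeroObject E] [HasFiniteBiproducts E] [HasBinaryBiproducts E]
  [∀ X Y : E, FiniteDimensional k (X ⟶ Y)]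
variable {Cst : Type u'} [Category.{v'} Cst] [Preadditive Cst]
  [CategoryTheory.Linear k Cst] [HasZeroObject Cst] [HasShift Cst ℤ]
  [∀ n : ℤ, (CategoryTheory.shiftFunctor Cst n).Additive] [Pretriangulated Cst]
  [HasFiniteBiproducts Cst] [∀ X Y : Cst, FiniteDimensional k (X ⟶ Y)]

/-!
Statement 9 (Fu–Keller, Lemma `lem3`): let `ℰ` be a Hom-finite Frobenius category whose
stable category is 2-Calabi–Yau, with cluster-tilting object `T`, `C = End_ℰ(T)` and
`F = Hom_ℰ(T, ?) : ℰ → mod C`.  The `F`-exact sequences form an exact structure on `ℰ`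
whose projectives are `add T`; computing its extension groups `Ext_F^i(X, Z)` from any
`F`-exact projective resolution of `X` (for `i ≥ 1`, `Ext_F^i(X,Z)` is the cokernel of
`Hom(P_{i-1}, Z) → Hom(K_i, Z)`, and `Ext_F^0(X,Z) = Hom_ℰ(X,Z)`), there are functorial
isomorphisms `Ext_F^i(X, Z) ≅ Ext^i_C(F X, F Z)` for all `i ≥ 0`.
-/
theorem stmt_9
    (ε : ExStruct E) (hfrob : ε.IsFrobenius)
    (π : E ⥤ Cst) (hstq : IsStableQuotient ε π) (h2cy : IsTwoCYst k Cst)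
    (T : E) (hct : ε.IsCT T)
    (X Z : E) (R : FProjRes ε T X) :
    -- degree 0: `Hom_ℰ(X, Z) ≅ Hom_C(F X, F Z)`
    Nonempty ((X ⟶ Z) ≃ₗ[k] (Fmod T X ⟶ Fmod T Z)) ∧
    -- degree `i + 1`: `Ext_F^{i+1}(X, Z) ≅ Ext_C^{i+1}(F X, F Z)`
    (∀ i : ℕ,
      Nonempty
        (((R.K (i + 1) ⟶ Z) ⧸ LinearMap.range (precompLin k (R.ι i) Z)) ≃ₗ[k]
          (((Ext k (ModuleCat (End T)ᵐᵒᵖ) (i + 1)).obj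
              (Opposite.op (Fmod T X))).obj (Fmod T Z)))) := by
  constructor
  · -- degree 0
    haveI := FK.conf_epi (R.conf 0)
    refine ⟨FK.homEquiv k T (R.projT 0) (R.pr 0 ≫ R.iso0.hom) inferInstance ?_ ?_ Z⟩
    · intro t
      obtain ⟨l, hl⟩ := R.fexact 0 (t ≫ R.iso0.inv)
      refine ⟨l, ?_⟩
      rw [← Category.assoc, hl, Category.assoc, Iso.inv_hom_id, Category.comp_id]
    · intro W h hh
      have h1 : R.pr 1 ≫ R.ι 0 ≫ h = 0 := by
        refine FK.add_faithful (R.projT 1) _ (fun t => ?_)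
        have h2 : (t ≫ R.pr 1 ≫ R.ι 0) ≫ (R.pr 0 ≫ R.iso0.hom) = 0 := by
          have h0 : R.ι 0 ≫ R.pr 0 ≫ R.iso0.hom = 0 := by
            rw [← Category.assoc, ε.comp_zero _ _ (R.conf 0), zero_comp]
          rw [Category.assoc, Category.assoc, h0, comp_zero, comp_zero]
        have h3 := hh (t ≫ R.pr 1 ≫ R.ι 0) h2
        rw [Category.assoc, Category.assoc] at h3
        exact h3
      have h4 : R.ι 0 ≫ h = 0 := by
        haveI := FK.conf_epi (R.conf 1)
        refine (cancel_epi (R.pr 1)).mp ?_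
        show R.pr 1 ≫ R.ι 0 ≫ h = R.pr 1 ≫ 0
        rw [comp_zero]
        exact h1
      obtain ⟨l, hl, -⟩ := ε.is_cokernel (R.ι 0) (R.pr 0) (R.conf 0) h h4
      refine ⟨R.iso0.inv ≫ l, ?_⟩
      rw [Category.assoc, Iso.hom_inv_id_assoc, hl]
  · exact fun i => FK.ext_equiv k T R Z i
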